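/- Let A be a finite alphabet, let x ∈ A^ℤ be aperiodic, and let 0 ≤ t < t' < p be integers such that (p,t) is a strong rank-2 cut of x. Then (p,t') is a strong rank-2 cut of x if and only if [t, t') ⊆ Per_p(x) or [t', t+p) ⊆ Per_p(x). -/

import Mathlib

namespace ToeplitzFR

open Set

variable {A B C : Type*}

/-- The shift map `S` on `ℤ → A`: `S(x)(i) = x(i+1)`. -/
def shift (x : ℤ → A) : ℤ → A := fun i => x (i + 1)

/-- The inverse shift map `S⁻¹`. -/
def shiftInv (x : ℤ → A) : ℤ → A := fun i => x (i - 1)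

/-- The shift by `k`: `S^k`. -/
def shiftBy (k : ℤ) (x : ℤ → A) : ℤ → A := fun i => x (i + k)

/-- The finite word `x[i, i+n)`. -/
def factorAt (x : ℤ → A) (i : ℤ) (n : ℕ) : List A :=
  (List.range n).map fun j => x (i + j)

/-- `x` is a periodic point of the shift. -/
def IsPeriodicPoint (x : ℤ → A) : Prop := ∃ p : ℕ, 0 < p ∧ ∀ i : ℤ, x (i + p) = x i

def IsAperiodicPoint (x : ℤ → A) : Prop := ¬ IsPeriodicPoint x

/-- `Per_p(x)`. -/
def PerSet (x : ℤ → A) (p : ℕ) : Set ℤ := {i : ℤ | ∀ k : ℤ, x (i + k * p) = x i}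

/-- `Per(x) = ⋃_{p>1} Per_p(x)`. -/
def PerAll (x : ℤ → A) : Set ℤ := {i : ℤ | ∃ p : ℕ, 1 < p ∧ i ∈ PerSet x p}

/-- `x` is a Toeplitz sequence. -/
def IsToeplitz (x : ℤ → A) : Prop := ∀ i : ℤ, ∃ p : ℕ, 1 < p ∧ i ∈ PerSet x p

/-- The shift orbit of `x`. -/
def orbit (x : ℤ → A) : Set (ℤ → A) := {y | ∃ k : ℤ, y = shiftBy k x}

/-- `X` is the Toeplitz subshift generated by the Toeplitz sequence `x`. -/
def ToeplitzGenerates [TopologicalSpace A] (x : ℤ → A) (X : Set (ℤ → A)) : Prop :=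
  IsToeplitz x ∧ X = closure (orbit x)

/-- `X` is a Toeplitz subshift. -/
def IsToeplitzSubshift [TopologicalSpace A] (X : Set (ℤ → A)) : Prop :=
  ∃ x : ℤ → A, ToeplitzGenerates x X

/-- The `p`-skeleton of `x`, with `none` as the blank symbol. -/
noncomputable def Skel (x : ℤ → A) (p : ℕ) : ℤ → Option A :=
  fun i => @ite _ (i ∈ PerSet x p) (Classical.dec _) (some (x i)) none

/-- `p` is an essential period of `x`. -/
def IsEssentialPeriod (x : ℤ → A) (p : ℕ) : Prop :=
  1 < p ∧ ∀ q : ℕ, 0 < q → q < p → ∃ i : ℤ, Skel x p (i + q) ≠ Skel x p i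

/-- `(P n)` is a period structure for `x`. -/
def IsPeriodStructure (x : ℤ → A) (P : ℕ → ℕ) : Prop :=
  StrictMono P ∧ (∀ n, IsEssentialPeriod x (P n)) ∧ (∀ n, P n ∣ P (n+1)) ∧
    ∀ i : ℤ, ∃ n, i ∈ PerSet x (P n)

/-- `q` divides the scale of the Toeplitz subshift `X`. -/
def DividesScale [TopologicalSpace A] (X : Set (ℤ → A)) (q : ℕ) : Prop :=
  ∃ (x : ℤ → A) (P : ℕ → ℕ),
    ToeplitzGenerates x X ∧ IsPeriodStructure x P ∧ ∃ n, q ∣ P n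

/-! ### Directive sequences and S-adic subshifts -/

/-- All morphisms in the directive sequence are non-erasing. -/
def NonErasing {A : ℕ → Type*} (τ : ∀ n, A (n+1) → List (A n)) : Prop :=
  ∀ n a, τ n a ≠ []

/-- The directive sequence has constant length. -/
def ConstantLength {A : ℕ → Type*} (τ : ∀ n, A (n+1) → List (A n)) : Prop :=
  ∀ n, ∀ a b : A (n+1), (τ n a).length = (τ n b).length

/-- The directive sequence is proper. -/
def ProperSeq {A : ℕ → Type*} (τ : ∀ n, A (n+1) → List (A n)) : Prop :=
  ∀ n, ∃ b c : A n, ∀ a : A (n+1), (τ n a).head? = some b ∧ (τ n a).getLast? = some c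

/-- `sadicWordAux τ n k a = τ_{[n, n+k)}(a)`. -/
def sadicWordAux {A : ℕ → Type*} (τ : ∀ n, A (n+1) → List (A n)) (n : ℕ) :
    ∀ k : ℕ, A (n + k) → List (A n)
  | 0, a => [a]
  | (k+1), a => (τ (n+k) a).flatMap (sadicWordAux τ n k)

/-- `word0 τ k a = τ_{[0, k)}(a)` for `a ∈ A k`. -/
def word0 {A : ℕ → Type*} (τ : ∀ n, A (n+1) → List (A n)) :
    ∀ k : ℕ, A k → List (A 0)
  | 0, a => [a]
  | (k+1), a => (τ k a).flatMap (word0 τ k)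

/-- The directive sequence is primitive. -/
def PrimitiveSeq {A : ℕ → Type*} (τ : ∀ n, A (n+1) → List (A n)) : Prop :=
  ∀ n, ∃ k : ℕ, 0 < k ∧ ∀ (a : A (n+k)) (b : A n), b ∈ sadicWordAux τ n k a

/-- The `n`-th level `X_τ^{(n)}` of the S-adic system generated by `τ`. -/
def XLevel {A : ℕ → Type*} (τ : ∀ n, A (n+1) → List (A n)) (n : ℕ) :
    Set (ℤ → A n) :=
  {y | ∀ (i : ℤ) (m : ℕ), ∃ k : ℕ, 0 < k ∧ ∃ a : A (n+k),
      (factorAt y i m).IsInfix (sadicWordAux τ n k a)}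

/-- The alphabet rank (`liminf_n |A_n|`) is at most `K`. -/
def AlphabetRankLE (A : ℕ → Type*) [∀ n, Fintype (A n)] (K : ℕ) : Prop :=
  ∀ N : ℕ, ∃ n, N ≤ n ∧ Fintype.card (A n) ≤ K

/-! ### Recognizability -/

/-- `z` is the bi-infinite concatenation `⋯σ(y(-1)).σ(y(0))σ(y(1))⋯`,
with `σ(y(0))` starting at coordinate `0`. -/
def IsConcat (σ : B → List C) (y : ℤ → B) (z : ℤ → C) : Prop :=
  ∃ c : ℤ → ℤ, c 0 = 0 ∧ (∀ j : ℤ, c (j + 1) = c j + (σ (y j)).length) ∧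
    ∀ (j : ℤ) (m : Fin (σ (y j)).length), z (c j + (m : ℕ)) = (σ (y j)).get m

/-- `(y, k)` is a centered `σ`-representation of `x` in `Y`. -/
def IsCenteredRep (σ : B → List C) (Y : Set (ℤ → B)) (x : ℤ → C)
    (y : ℤ → B) (k : ℕ) : Prop :=
  y ∈ Y ∧ k < (σ (y 0)).length ∧ IsConcat σ y (fun m => x (m - k))

/-- The morphism `σ` is recognizable in `Y`. -/
def RecognizableIn (σ : B → List C) (Y : Set (ℤ → B)) : Prop :=
  ∀ (x : ℤ → C) (y y' : ℤ → B) (k k' : ℕ),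
    IsCenteredRep σ Y x y k → IsCenteredRep σ Y x y' k' → y = y' ∧ k = k'

/-- The directive sequence `τ` is recognizable. -/
def RecognizableSeq {A : ℕ → Type*} (τ : ∀ n, A (n+1) → List (A n)) : Prop :=
  ∀ n, RecognizableIn (τ n) (XLevel τ (n+1))

/-! ### Conjugacy -/

/-- `(X, TX)` and `(Y, TY)` are conjugate via a homeomorphism. -/
def ConjugateBy [TopologicalSpace A] [TopologicalSpace B]
    (X : Set (ℤ → A)) (Y : Set (ℤ → B))
    (TX : (ℤ → A) → (ℤ → A)) (TY : (ℤ → B) → (ℤ → B)) : Prop :=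
  ∃ φ : ↥X ≃ₜ ↥Y, ∀ (x : ℤ → A) (hx : x ∈ X) (hx' : TX x ∈ X),
    (φ ⟨TX x, hx'⟩).1 = TY (φ ⟨x, hx⟩).1

/-- `(X, S)` and `(Y, S)` are conjugate subshifts. -/
def Conjugate [TopologicalSpace A] [TopologicalSpace B]
    (X : Set (ℤ → A)) (Y : Set (ℤ → B)) : Prop :=
  ConjugateBy X Y shift shift

/-- `X` is a strong Toeplitz subshift of rank `K`: it is conjugate to the S-adic subshift
of a constant-length, primitive, proper and recognizable directive sequence of
alphabet rank at most `K`. -/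
def IsStrongToeplitzOfRank [TopologicalSpace A] (X : Set (ℤ → A)) (K : ℕ) : Prop :=
  ∃ (B : ℕ → Type) (iB : ∀ n, Fintype (B n)) (σ : ∀ n, B (n+1) → List (B n)),
    NonErasing σ ∧ ConstantLength σ ∧ PrimitiveSeq σ ∧ ProperSeq σ ∧
    RecognizableSeq σ ∧ @AlphabetRankLE B iB K ∧
    @Conjugate A (B 0) _ ⊥ X (XLevel σ 0)

/-- `X` is conjugate to the S-adic subshift of a primitive, proper and recognizable
directive sequence of alphabet rank at most `K`. -/
def HasFiniteRankSAdicRep [TopologicalSpace A] (X : Set (ℤ → A)) (K : ℕ) : Prop :=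
  ∃ (B : ℕ → Type) (iB : ∀ n, Fintype (B n)) (σ : ∀ n, B (n+1) → List (B n)),
    NonErasing σ ∧ PrimitiveSeq σ ∧ ProperSeq σ ∧
    RecognizableSeq σ ∧ @AlphabetRankLE B iB K ∧
    @Conjugate A (B 0) _ ⊥ X (XLevel σ 0)

/-! ### Cuts, languages, built-from -/

/-- The set of words `{x[t+kp, t+(k+1)p) : k ∈ ℤ}`. -/
def cutWords (x : ℤ → A) (p t : ℕ) : Set (List A) :=
  {w | ∃ k : ℤ, w = factorAt x ((t : ℤ) + k * p) p}

/-- `(p, t)` is a strong rank-2 cut of `x`. -/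
def StrongRank2Cut (x : ℤ → A) (p t : ℕ) : Prop :=
  t < p ∧ ∃ u v : List A, u ≠ v ∧ cutWords x p t = {u, v}

/-- The language `L_n(X)`. -/
def Lang (n : ℕ) (X : Set (ℤ → A)) : Set (List A) :=
  {w | ∃ x ∈ X, ∃ i : ℤ, w = factorAt x i n}

/-- The maximal common prefix of `u` and `v` has length greater than `m`. -/
def CommonPrefixLongerThan (u v : List A) (m : ℕ) : Prop :=
  m + 1 ≤ u.length ∧ m + 1 ≤ v.length ∧ u.take (m+1) = v.take (m+1)

/-- The maximal common suffix of `u` and `v` has length greater than `m`. -/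
def CommonSuffixLongerThan (u v : List A) (m : ℕ) : Prop :=
  CommonPrefixLongerThan u.reverse v.reverse m

/-- `b = (β₀, (α₁, …, α_k), β₁)` is a building of the word `w` from `W`:
`w = β₀α₁⋯α_kβ₁`, all `αᵢ ∈ W`, `β₀` is a proper suffix of an element of `W`,
and `β₁` is a proper prefix of an element of `W`. -/
def IsBuilding (W : Set (List A)) (w : List A)
    (b : List A × List (List A) × List A) : Prop :=
  w = b.1 ++ b.2.1.flatten ++ b.2.2 ∧ (∀ α ∈ b.2.1, α ∈ W) ∧
  (∃ u ∈ W, b.1 <:+ u ∧ b.1 ≠ u) ∧ (∃ u ∈ W, b.2.2 <+: u ∧ b.2.2 ≠ u)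

/-- `w` is uniquely built from `W`. -/
def UniquelyBuiltFrom (W : Set (List A)) (w : List A) : Prop :=
  ∃! b : List A × List (List A) × List A, IsBuilding W w b

/-- `X` together with one of its points satisfies the strong rank-2 cut property. -/
def GoodCuts [TopologicalSpace A] (X : Set (ℤ → A)) (x : ℤ → A) : Prop :=
  ∀ p : ℕ, 0 < p → DividesScale X p → ∀ m : ℕ,
    ∃ q t : ℕ, StrongRank2Cut x q t ∧ p ∣ q ∧ DividesScale X q ∧
      ∃ u v : List A, u ≠ v ∧ cutWords x q t = {u, v} ∧
        CommonPrefixLongerThan u v m ∧ CommonSuffixLongerThan u v m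

/-! ### Euclidean pairs and buildings of bi-infinite sequences -/

/-- `{u, v}` is a Euclidean pair. -/
def EuclideanPair (u v : List A) : Prop :=
  ∃ (w : List A) (k l : ℕ),
    u = (List.replicate k w).flatten ∧ v = (List.replicate l w).flatten

/-- `α` is the distinguished prefix of `u` and `v`. -/
def IsDistinguishedPrefix (u v α : List A) : Prop :=
  α.length < u.length + v.length ∧
  ∀ x y : List A,
    (∃ l : List (List A), (∀ w ∈ l, w = u ∨ w = v) ∧ x = u ++ l.flatten) →
    (∃ l : List (List A), (∀ w ∈ l, w = u ∨ w = v) ∧ y = v ++ l.flatten) →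
    α.length + 1 ≤ x.length → α.length + 1 ≤ y.length →
    α <+: x ∧ α <+: y ∧ x[α.length]? ≠ y[α.length]?

/-- `β` is the distinguished suffix of `u` and `v`. -/
def IsDistinguishedSuffix (u v β : List A) : Prop :=
  IsDistinguishedPrefix u.reverse v.reverse β.reverse

/-- `(c, f)` is a building of the bi-infinite sequence `x` from `W`:
block `j` starts at position `c j` and carries the word `f j ∈ W`. -/
def IsBuildingSeq (W : Set (List A)) (x : ℤ → A) (c : ℤ → ℤ) (f : ℤ → List A) : Prop :=
  (∀ j : ℤ, f j ∈ W) ∧ (∀ j : ℤ, c (j + 1) = c j + (f j).length) ∧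
  ∀ (j : ℤ) (m : Fin (f j).length), x (c j + (m : ℕ)) = (f j).get m

/-- The subshift `X_{u,v}` of all sequences built from `{u, v}`. -/
def Xuv (u v : List A) : Set (ℤ → A) :=
  {x | ∃ (c : ℤ → ℤ) (f : ℤ → List A), IsBuildingSeq {u, v} x c f}

/-! ### Block-code conjugacies -/

/-- A conjugacy `φ : X → Y` admitting block width `2n+1`. -/
structure BlockConjugacy (A : Type*) (X Y : Set (ℤ → A)) (n : ℕ) where
  toFun : (ℤ → A) → (ℤ → A)
  invFun : (ℤ → A) → (ℤ → A)
  maps_to : ∀ x ∈ X, toFun x ∈ Y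
  maps_from : ∀ y ∈ Y, invFun y ∈ X
  left_inv : ∀ x ∈ X, invFun (toFun x) = x
  right_inv : ∀ y ∈ Y, toFun (invFun y) = y
  shift_comm : ∀ x ∈ X, toFun (shift x) = shift (toFun x)
  code : List A → A
  code_inv : List A → A
  code_spec : ∀ x ∈ X, ∀ i : ℤ, toFun x i = code (factorAt x (i - n) (2*n+1))
  code_inv_spec : ∀ y ∈ Y, ∀ i : ℤ, invFun y i = code_inv (factorAt y (i - n) (2*n+1))

/-! ### Parts, permutation action, χ -/

/-- `W` is a member of `Parts(X, p)`: a class of the common-`p`-skeleton relation. -/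
def SkelClass (X : Set (ℤ → A)) (p : ℕ) (W : Set (ℤ → A)) : Prop :=
  ∃ y ∈ X, W = {z ∈ X | Skel z p = Skel y p}

/-- The map `ψ̂` induced by a permutation `ψ` of `A^p`. -/
def permHat (p : ℕ) (ψ : Equiv.Perm (Fin p → A)) (x : ℤ → A) : ℤ → A :=
  fun i =>
    if h : (i.emod p).toNat < p then
      ψ (fun m : Fin p => x (i - i.emod p + (m : ℕ))) ⟨(i.emod p).toNat, h⟩
    else x i

/-- The relation `E_p` on compact subsets of `A^ℤ`. -/
def EpRel (p : ℕ) (K L : Set (ℤ → A)) : Prop :=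
  ∃ ψ : Equiv.Perm (Fin p → A), L = permHat p ψ '' K

/-- `W ∈ Parts_*(X, p)`. -/
def SkelClassStar (X : Set (ℤ → A)) (p : ℕ) (W : Set (ℤ → A)) : Prop :=
  SkelClass X p W ∧ ∀ y ∈ W, Skel y p (-1) = none ∧ Skel y p 0 ≠ none

/-- `length(W) = L` for `W ∈ Parts_*(X, p)`. -/
def HasLength (p : ℕ) (W : Set (ℤ → A)) (L : ℕ) : Prop :=
  ∀ y ∈ W, (∀ i : ℕ, i < L → Skel y p (i : ℤ) ≠ none) ∧ Skel y p (L : ℤ) = none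

/-- `Z ∈ χ(X, p)`. -/
def ChiMem (X : Set (ℤ → A)) (p : ℕ) (Z : Set (ℤ → A)) : Prop :=
  ∃ (W : Set (ℤ → A)) (L : ℕ), SkelClassStar X p W ∧ HasLength p W L ∧
    (∀ (W' : Set (ℤ → A)) (L' : ℕ),
      SkelClassStar X p W' → HasLength p W' L' → L' ≤ L) ∧
    Z = shiftBy ((L / 2 : ℕ) : ℤ) '' W

/-- `χ(X, p) E_p^fin χ(Y, p)`. -/
def ChiEpFin (X Y : Set (ℤ → A)) (p : ℕ) : Prop :=
  (∀ K, ChiMem X p K → ∃ L, ChiMem Y p L ∧ EpRel p K L) ∧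
  (∀ L, ChiMem Y p L → ∃ K, ChiMem X p K ∧ EpRel p K L)

/-! ### Single holes and fillings -/

/-- The Toeplitz sequence `x` has single holes with respect to the period structure `P`. -/
def SingleHoles (x : ℤ → A) (P : ℕ → ℕ) : Prop :=
  IsPeriodStructure x P ∧
  ∀ n, ∃! i : ℤ, 0 ≤ i ∧ i < (P n : ℤ) ∧ i ∉ PerSet x (P n)

/-- The Toeplitz subshift `X` has single holes. -/
def HasSingleHoles [TopologicalSpace A] (X : Set (ℤ → A)) : Prop :=
  ∃ (x : ℤ → A) (P : ℕ → ℕ), ToeplitzGenerates x X ∧ SingleHoles x P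

/-- `w` is the `(n, m)`-filling of `x` (for periods `pn < pm`). -/
def IsFilling (x : ℤ → A) (pn pm : ℕ) (w : List A) : Prop :=
  w.length = pm / pn - 1 ∧
  ∀ h : ℤ, 0 ≤ h → h < (pm : ℤ) → h ∉ PerSet x pm →
    ∀ (j : ℕ) (hj : j < w.length), w.get ⟨j, hj⟩ = x (h + (j+1) * pn)

/-- `u` is a `θ`-palindrome. -/
def ThetaPalindrome (θ : Equiv.Perm A) (u : List A) : Prop :=
  u.map (fun a => θ a) = u.reverse

/-! ### Nice symmetries -/

/-- `x` has nice symmetries with respect to `(p, q)`. -/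
def NiceSymmetries (x : ℤ → A) (p q : ℕ) : Prop :=
  ∃ m : ℤ, 1 < m ∧ m ≤ (q : ℤ) + 1 ∧
    (∀ k : ℕ, k < q / p →
      (Set.Ico ((k * p : ℕ) : ℤ) (((k+1) * p : ℕ) : ℤ) ⊆ PerSet x q ↔
       Set.Ico (m - ((k+1) * p : ℕ)) (m - (k * p : ℕ)) ⊆ PerSet x q)) ∧
    (∀ k k' : ℕ, k < q / p → k' < q / p →
      Set.Ico ((k * p : ℕ) : ℤ) (((k+1) * p : ℕ) : ℤ) ⊆ PerSet x q →
      Set.Ico ((k' * p : ℕ) : ℤ) (((k'+1) * p : ℕ) : ℤ) ⊆ PerSet x q →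
      (factorAt x ((k * p : ℕ) : ℤ) p = factorAt x ((k' * p : ℕ) : ℤ) p ↔
       factorAt x (m - ((k+1) * p : ℕ)) p = factorAt x (m - ((k'+1) * p : ℕ)) p))

/-- For some `p` dividing the scale of `X`, `x` has nice symmetries with respect to
`(p, q)` for all `q > p` with `p ∣ q` dividing the scale of `X`. -/
def NiceSymAll [TopologicalSpace A] (X : Set (ℤ → A)) (x : ℤ → A) : Prop :=
  ∃ p : ℕ, 0 < p ∧ DividesScale X p ∧
    ∀ q : ℕ, p < q → p ∣ q → DividesScale X q → NiceSymmetries x p q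

/-- A pair `(x, x')` is a centered left asymptotic pair. -/
def CenteredLeftAsymptoticPair (x x' : ℤ → A) : Prop :=
  (∀ i : ℤ, i < 0 → x i = x' i) ∧ x 0 ≠ x' 0

/-! ### Automorphism groups -/

/-- `e` is an automorphism of the subshift `(X, S)`. -/
def IsShiftAutomorphism [TopologicalSpace A] (X : Set (ℤ → A)) (e : ↥X ≃ₜ ↥X) : Prop :=
  ∀ (x : ℤ → A) (hx : x ∈ X) (hx' : shift x ∈ X),
    (e ⟨shift x, hx'⟩).1 = shift (e ⟨x, hx⟩).1

/-- The automorphism group of `(X, S)` is isomorphic, as a group, to `ℤ × ℤ/nℤ`. -/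
def AutGroupIsoZxZmod [TopologicalSpace A] (X : Set (ℤ → A)) (n : ℕ) : Prop :=
  ∃ Φ : {e : ↥X ≃ₜ ↥X // IsShiftAutomorphism X e} → ℤ × ZMod n,
    Function.Bijective Φ ∧
    ∀ e f g : {e : ↥X ≃ₜ ↥X // IsShiftAutomorphism X e},
      (∀ z : ↥X, g.1 z = e.1 (f.1 z)) → Φ g = Φ e + Φ f

/-! ### The Polish space of subshifts over `ℤ` -/

/-- A point of the space `𝐒` of all (compact, nonempty, shift-invariant) subshifts
over finite alphabets contained in `ℤ`. -/
structure SubshiftSpace : Type where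
  carrier : Set (ℤ → ℤ)
  nonempty : carrier.Nonempty
  compact : IsCompact carrier
  invariant : shift '' carrier = carrier

/-- The topology on `𝐒` induced by the languages `(L_n(X))_{n}`, with each
family of `n`-languages discrete; this coincides with the metric
`d(X,Y) = 2^{-min{n : L_n(X) ≠ L_n(Y)}}`. -/
instance : TopologicalSpace SubshiftSpace :=
  TopologicalSpace.induced
    (fun X : SubshiftSpace => (fun n => Lang n X.carrier : ℕ → Set (List ℤ)))
    (@Pi.topologicalSpace ℕ (fun _ => Set (List ℤ)) (fun _ => ⊥))

/-- The subset `𝐌 ⊆ 𝐒` of infinite minimal subshifts. -/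
def MinimalSet : Set SubshiftSpace :=
  {X | X.carrier.Infinite ∧ ∀ x ∈ X.carrier, X.carrier ⊆ closure (orbit x)}


-- helpers
lemma factorAt_repr {A : Type*} (x : ℤ → A) (i : ℤ) (n : ℕ) :
    factorAt x i n = (List.range n).map (fun j : ℕ => x (i + (j:ℤ))) := by
  unfold factorAt
  simp
  rw [← List.map_eq_flatMap (f := fun a : ℕ => (a:ℤ)) (l := List.range n), List.map_map]
  rfl

lemma factorAt_eq_iff {A : Type*} (x : ℤ → A) (i i' : ℤ) (n : ℕ) :
    factorAt x i n = factorAt x i' n ↔ ∀ j : ℕ, j < n → x (i + j) = x (i' + j) := by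
  rw [factorAt_repr, factorAt_repr]
  constructor
  · intro h j hj
    have := congrArg (fun l : List A => l[j]?) h
    simp only [List.getElem?_map, List.getElem?_range hj, Option.map_some] at this
    exact Option.some_injective _ this
  · intro h
    apply List.ext_getElem
    · simp
    · intro j hj hj'
      simp only [List.getElem_map, List.getElem_range]
      exact h j (by simpa using hj)

/-- The prefix parts of blocks `k` and `k'` agree. -/
def PreP {A : Type*} (x : ℤ → A) (p t t' : ℕ) (k k' : ℤ) : Prop :=
  ∀ j : ℕ, t + j < t' → x ((t:ℤ) + k*p + j) = x ((t:ℤ) + k'*p + j)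

/-- The suffix parts of blocks `k` and `k'` agree. -/
def SufP {A : Type*} (x : ℤ → A) (p t t' : ℕ) (k k' : ℤ) : Prop :=
  ∀ j : ℕ, t' ≤ t + j → j < p → x ((t:ℤ) + k*p + j) = x ((t:ℤ) + k'*p + j)

lemma B_eq_iff {A : Type*} (x : ℤ → A) (p t t' : ℕ) (h1 : t < t') (h2 : t' < p) (k k' : ℤ) :
    factorAt x ((t:ℤ) + k*p) p = factorAt x ((t:ℤ) + k'*p) p ↔
      PreP x p t t' k k' ∧ SufP x p t t' k k' := by
  rw [factorAt_eq_iff]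
  constructor
  · intro h
    exact ⟨fun j hj => h j (by omega), fun j hj1 hj2 => h j hj2⟩
  · rintro ⟨hp, hs⟩ j hj
    by_cases hc : t + j < t'
    · exact hp j hc
    · exact hs j (by omega) hj

lemma B'_eq_iff {A : Type*} (x : ℤ → A) (p t t' : ℕ) (h1 : t < t') (h2 : t' < p) (k k' : ℤ) :
    factorAt x ((t':ℤ) + k*p) p = factorAt x ((t':ℤ) + k'*p) p ↔
      SufP x p t t' k k' ∧ PreP x p t t' (k+1) (k'+1) := by
  rw [factorAt_eq_iff]
  constructor
  · intro h
    constructor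
    · intro j hj1 hj2
      have hj' : j - (t'-t) < p := by omega
      have e : ∀ K : ℤ, (t:ℤ) + K + j = (t':ℤ) + K + ((j - (t'-t) : ℕ) : ℤ) := by
        intro K; omega
      rw [e (k*p), e (k'*p)]
      exact h _ hj'
    · intro j hj
      have hj' : j + (p - (t'-t)) < p := by omega
      have e : ∀ K : ℤ, (t:ℤ) + (K + p) + j = (t':ℤ) + K + ((j + (p - (t'-t)) : ℕ) : ℤ) := by
        intro K; omega
      have ek : ((k:ℤ)+1)*p = k*p + p := by ring
      have ek' : ((k':ℤ)+1)*p = k'*p + p := by ring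
      rw [ek, ek', e (k*p), e (k'*p)]
      exact h _ hj'
  · rintro ⟨hs, hp2⟩ j hj
    by_cases hc : t' + j < t + p
    · have e : ∀ K : ℤ, (t':ℤ) + K + j = (t:ℤ) + K + ((j + (t'-t) : ℕ) : ℤ) := by
        intro K; omega
      rw [e (k*p), e (k'*p)]
      exact hs _ (by omega) (by omega)
    · have e : ∀ K : ℤ, (t':ℤ) + K + j = (t:ℤ) + (K + p) + ((j - (p-(t'-t)) : ℕ) : ℤ) := by
        intro K; omega
      have ek : ((k:ℤ)+1)*p = k*p + p := by ring
      have ek' : ((k':ℤ)+1)*p = k'*p + p := by ring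
      rw [e (k*p), e (k'*p), ← ek, ← ek']
      exact hp2 _ (by omega)

lemma per_pre {A : Type*} (x : ℤ → A) (p t t' : ℕ) (h1 : t < t') :
    (Set.Ico (t:ℤ) (t':ℤ) ⊆ PerSet x p) ↔ ∀ k k' : ℤ, PreP x p t t' k k' := by
  constructor
  · intro h k k' j hj
    have hi : ((t:ℤ) + j) ∈ Set.Ico (t:ℤ) (t':ℤ) := by
      simp only [Set.mem_Ico]; omega
    have hper := h hi
    simp only [PerSet, Set.mem_setOf_eq] at hper
    have e : ∀ K : ℤ, (t:ℤ) + K + j = (t:ℤ) + j + K := fun K => by ring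
    rw [e (k*p), e (k'*p), hper k, hper k']
  · intro h i hi
    simp only [Set.mem_Ico] at hi
    simp only [PerSet, Set.mem_setOf_eq]
    intro m
    have hij : (i:ℤ) = (t:ℤ) + ((i - t).toNat : ℕ) := by omega
    have hjlt : t + (i - (t:ℤ)).toNat < t' := by omega
    have e0 : ∀ K : ℤ, i + K = (t:ℤ) + K + ((i - (t:ℤ)).toNat : ℕ) := fun K => by omega
    have e2 : (i:ℤ) = (t:ℤ) + 0*p + ((i - (t:ℤ)).toNat : ℕ) := by rw [zero_mul]; omega
    rw [e0 (m*(p:ℤ))]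
    nth_rewrite 2 [e2]
    exact h m 0 _ hjlt

lemma per_suf {A : Type*} (x : ℤ → A) (p t t' : ℕ) (h1 : t < t') (h2 : t' < p) :
    (Set.Ico (t':ℤ) ((t:ℤ) + p) ⊆ PerSet x p) ↔ ∀ k k' : ℤ, SufP x p t t' k k' := by
  constructor
  · intro h k k' j hj1 hj2
    have hi : ((t:ℤ) + j) ∈ Set.Ico (t':ℤ) ((t:ℤ) + p) := by
      simp only [Set.mem_Ico]; omega
    have hper := h hi
    simp only [PerSet, Set.mem_setOf_eq] at hper
    have e : ∀ K : ℤ, (t:ℤ) + K + j = (t:ℤ) + j + K := fun K => by ring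
    rw [e (k*p), e (k'*p), hper k, hper k']
  · intro h i hi
    simp only [Set.mem_Ico] at hi
    simp only [PerSet, Set.mem_setOf_eq]
    intro m
    have hij : (i:ℤ) = (t:ℤ) + ((i - t).toNat : ℕ) := by omega
    have hc1 : t' ≤ t + (i - (t:ℤ)).toNat := by omega
    have hc2 : (i - (t:ℤ)).toNat < p := by omega
    have e0 : ∀ K : ℤ, i + K = (t:ℤ) + K + ((i - (t:ℤ)).toNat : ℕ) := fun K => by omega
    have e2 : (i:ℤ) = (t:ℤ) + 0*p + ((i - (t:ℤ)).toNat : ℕ) := by rw [zero_mul]; omega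
    rw [e0 (m*(p:ℤ))]
    nth_rewrite 2 [e2]
    exact h m 0 _ hc1 hc2

lemma aper_aux {A : Type*} (x : ℤ → A) (p t : ℕ) (hp : 0 < p)
    (h : ∀ (k : ℤ) (j : ℕ), j < p → x ((t:ℤ) + (k+2)*p + j) = x ((t:ℤ) + k*p + j)) :
    IsPeriodicPoint x := by
  refine ⟨2*p, by omega, fun i => ?_⟩
  set k : ℤ := (i - t) / p with hk
  set r : ℤ := (i - t) % p with hr
  have hpz : (p:ℤ) ≠ 0 := by exact_mod_cast hp.ne'
  have hr0 : 0 ≤ r := Int.emod_nonneg _ hpz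
  have hrp : r < p := Int.emod_lt_of_pos _ (by exact_mod_cast hp)
  have hdm : (p:ℤ) * k + r = i - t := Int.mul_ediv_add_emod _ _
  have hjr : ((r.toNat : ℕ) : ℤ) = r := Int.toNat_of_nonneg hr0
  have hjp : r.toNat < p := by omega
  have e1 : i + ((2*p : ℕ) : ℤ) = (t:ℤ) + (k+2)*p + (r.toNat : ℕ) := by
    rw [hjr]; push_cast; linear_combination -hdm
  have e2 : (t:ℤ) + k*p + ((r.toNat : ℕ) : ℤ) = i := by
    rw [hjr]; linear_combination hdm
  calc x (i + ((2*p : ℕ) : ℤ)) = x ((t:ℤ) + (k+2)*p + (r.toNat : ℕ)) := by rw [e1]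
    _ = x ((t:ℤ) + k*p + (r.toNat : ℕ)) := h k r.toNat hjp
    _ = x i := by rw [e2]


/-- Let `x` be aperiodic and `0 ≤ t < t' < p` with `(p, t)` a strong
rank-2 cut of `x`. Then `(p, t')` is a strong rank-2 cut of `x` iff
`[t, t') ⊆ Per_p(x)` or `[t', t+p) ⊆ Per_p(x)`. -/
theorem statement4 {A : Type*} [Fintype A] (x : ℤ → A) (hx : IsAperiodicPoint x)
    (p t t' : ℕ) (h1 : t < t') (h2 : t' < p) (hcut : StrongRank2Cut x p t) :
    StrongRank2Cut x p t' ↔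
      (Set.Ico (t : ℤ) (t' : ℤ) ⊆ PerSet x p ∨
       Set.Ico (t' : ℤ) ((t : ℤ) + p) ⊆ PerSet x p) := by
  obtain ⟨htp, u, v, huv, hW⟩ := hcut
  have hp0 : 0 < p := by omega
  set B : ℤ → List A := fun k => factorAt x ((t:ℤ) + k * p) p with hBdef
  set B' : ℤ → List A := fun k => factorAt x ((t':ℤ) + k * p) p with hB'def
  have hmem : ∀ k : ℤ, B k = u ∨ B k = v := by
    intro k
    have hk : B k ∈ cutWords x p t := ⟨k, rfl⟩
    rw [hW] at hk
    simpa using hk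
  obtain ⟨ku, hku⟩ : ∃ k, B k = u := by
    have hu : u ∈ cutWords x p t := by rw [hW]; exact Set.mem_insert _ _
    obtain ⟨k, hk⟩ := hu; exact ⟨k, hk.symm⟩
  obtain ⟨kv, hkv⟩ : ∃ k, B k = v := by
    have hv : v ∈ cutWords x p t := by rw [hW]; exact Set.mem_insert_of_mem _ rfl
    obtain ⟨k, hk⟩ := hv; exact ⟨k, hk.symm⟩
  have hBiff : ∀ k k', B k = B k' ↔ PreP x p t t' k k' ∧ SufP x p t t' k k' :=
    fun k k' => B_eq_iff x p t t' h1 h2 k k'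
  have hB'iff : ∀ k k', B' k = B' k' ↔ SufP x p t t' k k' ∧ PreP x p t t' (k+1) (k'+1) :=
    fun k k' => B'_eq_iff x p t t' h1 h2 k k'
  have hpre_of : ∀ {k k' : ℤ}, B k = B k' → PreP x p t t' k k' :=
    fun h => ((hBiff _ _).1 h).1
  have hsuf_of : ∀ {k k' : ℤ}, B k = B k' → SufP x p t t' k k' :=
    fun h => ((hBiff _ _).1 h).2
  have pretrans : ∀ {a b c : ℤ}, PreP x p t t' a b → PreP x p t t' b c → PreP x p t t' a c :=
    fun h h' j hj => (h j hj).trans (h' j hj)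
  have presymm : ∀ {a b : ℤ}, PreP x p t t' a b → PreP x p t t' b a :=
    fun h j hj => (h j hj).symm
  have suftrans : ∀ {a b c : ℤ}, SufP x p t t' a b → SufP x p t t' b c → SufP x p t t' a c :=
    fun h h' j hj hj' => (h j hj hj').trans (h' j hj hj')
  have sufsymm : ∀ {a b : ℤ}, SufP x p t t' a b → SufP x p t t' b a :=
    fun h j hj hj' => (h j hj hj').symm
  have preAll : PreP x p t t' ku kv → ∀ k k', PreP x p t t' k k' := by
    intro h0 k k'
    have g : ∀ m : ℤ, PreP x p t t' m kv := by
      intro m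
      rcases hmem m with hm | hm
      · exact pretrans (hpre_of (hm.trans hku.symm)) h0
      · exact hpre_of (hm.trans hkv.symm)
    exact pretrans (g k) (presymm (g k'))
  have sufAll : SufP x p t t' ku kv → ∀ k k', SufP x p t t' k k' := by
    intro h0 k k'
    have g : ∀ m : ℤ, SufP x p t t' m kv := by
      intro m
      rcases hmem m with hm | hm
      · exact suftrans (hsuf_of (hm.trans hku.symm)) h0
      · exact hsuf_of (hm.trans hkv.symm)
    exact suftrans (g k) (sufsymm (g k'))
  constructor
  · -- forward direction
    rintro ⟨-, u', v', hu'v', hW'⟩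
    by_contra hcon
    push_neg at hcon
    obtain ⟨hL, hR⟩ := hcon
    have hnpre : ¬ PreP x p t t' ku kv :=
      fun h => hL ((per_pre x p t t' h1).2 (preAll h))
    have hnsuf : ¬ SufP x p t t' ku kv :=
      fun h => hR ((per_suf x p t t' h1 h2).2 (sufAll h))
    have hpre_ne : ∀ k k', B k ≠ B k' → ¬ PreP x p t t' k k' := by
      intro k k' hne hpre
      rcases hmem k with h | h <;> rcases hmem k' with h' | h'
      · exact hne (h.trans h'.symm)
      · exact hnpre (pretrans (pretrans (hpre_of (hku.trans h.symm)) hpre)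
          (hpre_of (h'.trans hkv.symm)))
      · exact hnpre (presymm (pretrans (pretrans (hpre_of (hkv.trans h.symm)) hpre)
          (hpre_of (h'.trans hku.symm))))
      · exact hne (h.trans h'.symm)
    have hsuf_ne : ∀ k k', B k ≠ B k' → ¬ SufP x p t t' k k' := by
      intro k k' hne hsuf
      rcases hmem k with h | h <;> rcases hmem k' with h' | h'
      · exact hne (h.trans h'.symm)
      · exact hnsuf (suftrans (suftrans (hsuf_of (hku.trans h.symm)) hsuf)
          (hsuf_of (h'.trans hkv.symm)))
      · exact hnsuf (sufsymm (suftrans (suftrans (hsuf_of (hkv.trans h.symm)) hsuf)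
          (hsuf_of (h'.trans hku.symm))))
      · exact hne (h.trans h'.symm)
    have hpair : ∀ k k', B' k = B' k' ↔ (B k = B k' ∧ B (k+1) = B (k'+1)) := by
      intro k k'
      rw [hB'iff]
      constructor
      · rintro ⟨hs, hp2⟩
        constructor
        · by_contra hne; exact hsuf_ne k k' hne hs
        · by_contra hne; exact hpre_ne _ _ hne hp2
      · rintro ⟨e1, e2⟩; exact ⟨hsuf_of e1, hpre_of e2⟩
    have hmem' : ∀ k : ℤ, B' k = u' ∨ B' k = v' := by
      intro k
      have hk : B' k ∈ cutWords x p t' := ⟨k, rfl⟩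
      rw [hW'] at hk
      simpa using hk
    have pigeon : ∀ k1 k2 k3 : ℤ, B' k1 ≠ B' k2 → B' k1 ≠ B' k3 → B' k2 ≠ B' k3 → False := by
      intro k1 k2 k3 a b c
      rcases hmem' k1 with e1 | e1 <;> rcases hmem' k2 with e2 | e2 <;>
        rcases hmem' k3 with e3 | e3 <;>
        first
          | exact a (e1.trans e2.symm)
          | exact b (e1.trans e3.symm)
          | exact c (e2.trans e3.symm)
    by_cases hTT : ∃ k, B k = u ∧ B (k+1) = u
    · by_cases hFF : ∃ k, B k = v ∧ B (k+1) = v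
      · obtain ⟨k1, h1u, h1u'⟩ := hTT
        obtain ⟨k2, h2v, h2v'⟩ := hFF
        have hmix : ∃ k3, B k3 ≠ B (k3+1) := by
          by_contra hcc
          push_neg at hcc
          have hconst : ∀ k : ℤ, B k = B 0 := by
            intro k
            induction k using Int.induction_on with
            | zero => rfl
            | succ n ih => rw [← hcc (n:ℤ)]; exact ih
            | pred n ih =>
              have e := hcc (-(n:ℤ) - 1)
              rw [show (-(n:ℤ) - 1 + 1) = -(n:ℤ) by ring] at e
              rw [e]
              exact ih
          exact huv (by rw [← hku, ← hkv, hconst ku, hconst kv])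
        obtain ⟨k3, h3⟩ := hmix
        apply pigeon k1 k2 k3
        · rw [Ne, hpair]; rintro ⟨e, -⟩; exact huv (h1u.symm.trans (e.trans h2v))
        · rw [Ne, hpair]; rintro ⟨e1, e2⟩
          exact h3 (by rw [← e1, ← e2, h1u, h1u'])
        · rw [Ne, hpair]; rintro ⟨e1, e2⟩
          exact h3 (by rw [← e1, ← e2, h2v, h2v'])
      · push_neg at hFF
        obtain ⟨k1, h1u, h1u'⟩ := hTT
        have hkv1 : B (kv - 1 + 1) = v := by
          rw [show kv - 1 + 1 = kv by ring]; exact hkv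
        have hprev : B (kv - 1) = u := by
          rcases hmem (kv - 1) with h | h
          · exact h
          · exact absurd hkv1 (hFF _ h)
        have hnext : B (kv + 1) = u := by
          rcases hmem (kv + 1) with h | h
          · exact h
          · exact absurd h (hFF kv hkv)
        apply pigeon k1 (kv - 1) kv
        · rw [Ne, hpair]; rintro ⟨-, e2⟩; exact huv (h1u'.symm.trans (e2.trans hkv1))
        · rw [Ne, hpair]; rintro ⟨e1, -⟩; exact huv (h1u.symm.trans (e1.trans hkv))
        · rw [Ne, hpair]; rintro ⟨e1, -⟩; exact huv (hprev.symm.trans (e1.trans hkv))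
    · by_cases hFF : ∃ k, B k = v ∧ B (k+1) = v
      · push_neg at hTT
        obtain ⟨k1, h1v, h1v'⟩ := hFF
        have hku1 : B (ku - 1 + 1) = u := by
          rw [show ku - 1 + 1 = ku by ring]; exact hku
        have hprev : B (ku - 1) = v := by
          rcases hmem (ku - 1) with h | h
          · exact absurd hku1 (hTT _ h)
          · exact h
        have hnext : B (ku + 1) = v := by
          rcases hmem (ku + 1) with h | h
          · exact absurd h (hTT ku hku)
          · exact h
        apply pigeon k1 (ku - 1) ku
        · rw [Ne, hpair]; rintro ⟨-, e2⟩; exact huv (hku1.symm.trans (e2.symm.trans h1v'))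
        · rw [Ne, hpair]; rintro ⟨e1, -⟩; exact huv (hku.symm.trans (e1.symm.trans h1v))
        · rw [Ne, hpair]; rintro ⟨e1, -⟩; exact huv (hku.symm.trans (e1.symm.trans hprev))
      · push_neg at hTT hFF
        apply hx
        apply aper_aux x p t hp0
        intro k j hj
        have hBk2 : ∀ m : ℤ, B (m+2) = B m := by
          intro m
          rcases hmem m with h | h
          · have ha : B (m+1) = v := (hmem (m+1)).resolve_left (hTT m h)
            have hb : B (m+1+1) = u := (hmem _).resolve_right (hFF (m+1) ha)
            rw [show m+2 = m+1+1 by ring, hb, h]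
          · have ha : B (m+1) = u := (hmem (m+1)).resolve_right (hFF m h)
            have hb : B (m+1+1) = v := (hmem _).resolve_left (hTT (m+1) ha)
            rw [show m+2 = m+1+1 by ring, hb, h]
        exact (factorAt_eq_iff x _ _ p).1 (hBk2 k) j hj
  · -- backward direction
    rintro (hL | hR)
    · have hallpre : ∀ k k', PreP x p t t' k k' := (per_pre x p t t' h1).1 hL
      refine ⟨h2, B' ku, B' kv, ?_, ?_⟩
      · intro he
        have hsuf := ((hB'iff ku kv).1 he).1
        exact huv (by rw [← hku, ← hkv]; exact (hBiff ku kv).2 ⟨hallpre ku kv, hsuf⟩)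
      · ext w
        simp only [cutWords, Set.mem_setOf_eq, Set.mem_insert_iff, Set.mem_singleton_iff]
        constructor
        · rintro ⟨k, rfl⟩
          rcases hmem k with h | h
          · exact Or.inl ((hB'iff k ku).2 ⟨hsuf_of (h.trans hku.symm), hallpre _ _⟩)
          · exact Or.inr ((hB'iff k kv).2 ⟨hsuf_of (h.trans hkv.symm), hallpre _ _⟩)
        · rintro (rfl | rfl)
          exacts [⟨ku, rfl⟩, ⟨kv, rfl⟩]
    · have hallsuf : ∀ k k', SufP x p t t' k k' := (per_suf x p t t' h1 h2).1 hR
      refine ⟨h2, B' (ku - 1), B' (kv - 1), ?_, ?_⟩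
      · intro he
        have hpre' := ((hB'iff (ku-1) (kv-1)).1 he).2
        rw [show ku - 1 + 1 = ku by ring, show kv - 1 + 1 = kv by ring] at hpre'
        exact huv (by rw [← hku, ← hkv]; exact (hBiff ku kv).2 ⟨hpre', hallsuf _ _⟩)
      · ext w
        simp only [cutWords, Set.mem_setOf_eq, Set.mem_insert_iff, Set.mem_singleton_iff]
        constructor
        · rintro ⟨k, rfl⟩
          rcases hmem (k+1) with h | h
          · refine Or.inl ((hB'iff k (ku-1)).2 ⟨hallsuf _ _, ?_⟩)
            rw [show ku - 1 + 1 = ku by ring]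
            exact hpre_of (h.trans hku.symm)
          · refine Or.inr ((hB'iff k (kv-1)).2 ⟨hallsuf _ _, ?_⟩)
            rw [show kv - 1 + 1 = kv by ring]
            exact hpre_of (h.trans hkv.symm)
        · rintro (rfl | rfl)
          exacts [⟨ku - 1, rfl⟩, ⟨kv - 1, rfl⟩]

end ToeplitzFR
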